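/- Let φ(θ; x) = ∑_{k≥1} (x^k/k!) ∏_{a=1}^{k-1}(kθ - a) be a formal power series in x. Then exp(φ(θ; x)) - x·exp(θ·φ(θ; x)) = 1 as formal power series in x over ℚ[θ]. -/

import Mathlib

open PowerSeries Finset

/-- Formal exponential of a power series (intended for series with zero constant term). -/
noncomputable def expPS {R : Type*} [CommRing R] [Algebra ℚ R] (f : PowerSeries R) :
    PowerSeries R :=
  PowerSeries.mk fun n =>
    ∑ j ∈ Finset.range (n + 1), ((1 : ℚ) / j.factorial) • (PowerSeries.coeff (R := R) n (f ^ j))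

/-- `φ(θ; x) = ∑_{k≥1} (x^k/k!) ∏_{a=1}^{k-1} (kθ - a)`, a power series in `x`
with coefficients in `ℚ[θ]` (`θ = Polynomial.X`). -/
noncomputable def phiT : PowerSeries (Polynomial ℚ) :=
  PowerSeries.mk fun k =>
    if k = 0 then 0 else
      Polynomial.C ((1 : ℚ) / k.factorial) *
        ∏ a ∈ Finset.range (k - 1),
          ((k : Polynomial ℚ) * Polynomial.X - ((a : Polynomial ℚ) + 1))

section ApBp
variable {R : Type*} [CommRing R] [Algebra ℚ R]

/-- `Bp z x m = binom(x + m z, m)` as a polynomial expression. -/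
noncomputable def Bp (z x : R) (m : ℕ) : R :=
  ((1:ℚ) / m.factorial) • ∏ i ∈ Finset.range m, (x + (m : R) * z - (i : R))

/-- `Ap z x k = (x/(x+kz)) binom(x + k z, k)`. -/
noncomputable def Ap (z x : R) : ℕ → R
  | 0 => 1
  | (k+1) => ((1:ℚ) / (k+1).factorial) •
      (x * ∏ i ∈ Finset.range k, (x + ((k+1 : ℕ) : R) * z - ((i : R) + 1)))

@[simp] lemma Bp_zero (z x : R) : Bp z x 0 = 1 := by simp [Bp]

@[simp] lemma Ap_zero (z x : R) : Ap z x 0 = 1 := rfl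

lemma Ap_succ (z x : R) (k : ℕ) : Ap z x (k+1) = ((1:ℚ) / (k+1).factorial) •
      (x * ∏ i ∈ Finset.range k, (x + ((k+1 : ℕ) : R) * z - ((i : R) + 1))) := rfl

lemma natCast_mul_eq_smul (k : ℕ) (y : R) : (k : R) * y = (k : ℚ) • y := by
  rw [Algebra.smul_def, map_natCast]

lemma qfact (m : ℕ) : ((1:ℚ) / (m+1).factorial) * ((m+1 : ℕ) : ℚ) = (1:ℚ) / m.factorial := by
  rw [Nat.factorial_succ]
  push_cast
  have h1 : ((m.factorial : ℚ)) ≠ 0 := by positivity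
  have h2 : ((m : ℚ) + 1) ≠ 0 := by positivity
  field_simp

/-- difference of rising-length products -/
lemma prod_diff (y : R) (m : ℕ) :
    ∏ i ∈ Finset.range (m+1), (y + 1 - (i : R)) - ∏ i ∈ Finset.range (m+1), (y - (i : R))
      = ((m+1 : ℕ) : R) * ∏ i ∈ Finset.range m, (y - (i : R)) := by
  have h1 : ∏ i ∈ Finset.range (m+1), (y + 1 - (i : R))
      = (∏ i ∈ Finset.range m, (y - (i : R))) * (y + 1) := by
    rw [Finset.prod_range_succ']
    rw [show y + 1 - ((0:ℕ) : R) = y + 1 by push_cast; ring]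
    congr 1
    apply Finset.prod_congr rfl
    intro i _
    push_cast
    ring
  have h2 : ∏ i ∈ Finset.range (m+1), (y - (i : R))
      = (∏ i ∈ Finset.range m, (y - (i : R))) * (y - (m : R)) := by
    rw [Finset.prod_range_succ]
  rw [h1, h2]
  push_cast
  ring

/-- Pascal-type shift for Bp. -/
lemma Bp_shift (z x : R) (m : ℕ) :
    Bp z (x+1) (m+1) - Bp z x (m+1) = Bp z (x+z) m := by
  unfold Bp
  rw [← smul_sub]
  rw [show (∏ i ∈ range (m+1), (x + 1 + ((m+1:ℕ):R) * z - (i:R)))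
      = ∏ i ∈ range (m+1), ((x + ((m+1:ℕ):R)*z) + 1 - (i:R)) from
    Finset.prod_congr rfl (fun i _ => by ring)]
  rw [prod_diff (x + ((m+1:ℕ):R)*z) m, natCast_mul_eq_smul, smul_smul, qfact]
  congr 1
  apply Finset.prod_congr rfl
  intro i _
  push_cast
  ring

/-- Pascal-type shift for Ap. -/
lemma Ap_shift (z x : R) (k : ℕ) :
    Ap z (x+1) (k+1) - Ap z x (k+1) = Ap z (x+z) k := by
  cases k with
  | zero => simp [Ap_succ]
  | succ j =>
    rw [Ap_succ, Ap_succ, Ap_succ, ← smul_sub]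
    have e1 : ∏ i ∈ range (j+1), (x + 1 + ((j+1+1:ℕ):R)*z - ((i:R)+1))
        = (x + ((j+1+1:ℕ):R)*z) * ∏ i ∈ range j, (x + ((j+1+1:ℕ):R)*z - ((i:R)+1)) := by
      rw [Finset.prod_range_succ', mul_comm]
      congr 1
      · push_cast; ring
      · apply Finset.prod_congr rfl; intro i _; push_cast; ring
    have e2 : ∏ i ∈ range (j+1), (x + ((j+1+1:ℕ):R)*z - ((i:R)+1))
        = (∏ i ∈ range j, (x + ((j+1+1:ℕ):R)*z - ((i:R)+1))) * (x + ((j+1+1:ℕ):R)*z - ((j:R)+1)) :=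
      Finset.prod_range_succ _ _
    have e3 : ∏ i ∈ range j, (x + z + ((j+1:ℕ):R)*z - ((i:R)+1))
        = ∏ i ∈ range j, (x + ((j+1+1:ℕ):R)*z - ((i:R)+1)) :=
      Finset.prod_congr rfl (fun i _ => by push_cast; ring)
    have h1 : (x+1) * ∏ i ∈ range (j+1), (x + 1 + ((j+1+1:ℕ):R)*z - ((i:R)+1))
        - x * ∏ i ∈ range (j+1), (x + ((j+1+1:ℕ):R)*z - ((i:R)+1))
        = ((j+1+1:ℕ):R) * ((x+z) * ∏ i ∈ range j, (x + z + ((j+1:ℕ):R)*z - ((i:R)+1))) := by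
      rw [e1, e2, e3]
      push_cast
      ring
    rw [h1, natCast_mul_eq_smul, smul_smul, qfact]

end ApBp

section maps
variable {R : Type*} [CommRing R] [Algebra ℚ R] {S : Type*} [CommRing S] [Algebra ℚ S]

lemma map_Bp (ψ : R →ₐ[ℚ] S) (z x : R) (m : ℕ) : ψ (Bp z x m) = Bp (ψ z) (ψ x) m := by
  simp [Bp, map_smul, map_prod]

lemma map_Ap (ψ : R →ₐ[ℚ] S) (z x : R) (k : ℕ) : ψ (Ap z x k) = Ap (ψ z) (ψ x) k := by
  cases k with
  | zero => simp
  | succ j => simp [Ap_succ, map_smul, map_prod]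

end maps

lemma shift_eq_const {S : Type*} [CommRing S] [IsDomain S] [CharZero S] (p : Polynomial S)
    (h : p.comp (Polynomial.X + 1) = p) : p = Polynomial.C (p.eval 0) := by
  have hev : ∀ m : ℕ, p.eval ((m : ℕ) : S) = p.eval 0 := by
    intro m
    induction m with
    | zero => norm_num
    | succ m ih =>
      have h2 := congrArg (Polynomial.eval ((m : ℕ) : S)) h
      rw [Polynomial.eval_comp] at h2
      simp only [Polynomial.eval_add, Polynomial.eval_X, Polynomial.eval_one] at h2
      rw [← ih, ← h2]
      push_cast
      ring_nf
  have hroot : {x : S | (p - Polynomial.C (p.eval 0)).IsRoot x}.Infinite := by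
    apply Set.infinite_of_injective_forall_mem (f := fun m : ℕ => ((m : ℕ) : S))
    · exact fun a b hab => Nat.cast_injective hab
    · intro m
      simp [Polynomial.IsRoot, hev m]
  have h0 := Polynomial.eq_zero_of_infinite_isRoot _ hroot
  have := sub_eq_zero.mp h0
  exact this

theorem rothe {S : Type*} [CommRing S] [IsDomain S] [CharZero S] [Algebra ℚ S] (z b : S)
    (n : ℕ) :
    ∑ k ∈ Finset.range (n+1), Ap (Polynomial.C z) (Polynomial.X : Polynomial S) k * Bp (Polynomial.C z) (Polynomial.C b) (n-k)
      = Bp (Polynomial.C z) (Polynomial.X + Polynomial.C b) n := by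
  induction n with
  | zero => simp
  | succ n ih =>
    -- the shift-by-(Polynomial.X+Cz) image of the induction hypothesis
    have hτ : ∑ k ∈ Finset.range (n+1), Ap (Polynomial.C z) (Polynomial.X + Polynomial.C z : Polynomial S) k * Bp (Polynomial.C z) (Polynomial.C b) (n-k)
        = Bp (Polynomial.C z) (Polynomial.X + Polynomial.C z + Polynomial.C b) n := by
      let τ : Polynomial S →ₐ[ℚ] Polynomial S :=
        ((Polynomial.aeval (Polynomial.X + Polynomial.C z : Polynomial S)).restrictScalars ℚ)
      have hX : τ Polynomial.X = Polynomial.X + Polynomial.C z := by simp [τ]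
      have hC : ∀ s : S, τ (Polynomial.C s) = Polynomial.C s := by intro s; simp [τ]
      have h2 := congrArg τ ih
      rw [map_sum] at h2
      simp only [map_mul, map_Ap τ, map_Bp τ, map_add, hX, hC] at h2
      exact h2
    -- D is shift-invariant
    set D : Polynomial S :=
      (∑ k ∈ Finset.range (n+2), Ap (Polynomial.C z) (Polynomial.X : Polynomial S) k * Bp (Polynomial.C z) (Polynomial.C b) (n+1-k))
        - Bp (Polynomial.C z) (Polynomial.X + Polynomial.C b) (n+1) with hDdef
    have hshift : D.comp (Polynomial.X + 1) = D := by
      rw [Polynomial.comp_eq_aeval]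
      have hX : Polynomial.aeval (Polynomial.X + 1 : Polynomial S) (Polynomial.X : Polynomial S) = Polynomial.X + 1 := by simp
      have hC : ∀ s : S, Polynomial.aeval (Polynomial.X + 1 : Polynomial S) (Polynomial.C s) = Polynomial.C s := by
        intro s; simp
      have hσ : Polynomial.aeval (Polynomial.X + 1 : Polynomial S) D
          = (∑ k ∈ Finset.range (n+2), Ap (Polynomial.C z) (Polynomial.X + 1 : Polynomial S) k * Bp (Polynomial.C z) (Polynomial.C b) (n+1-k))
            - Bp (Polynomial.C z) (Polynomial.X + 1 + Polynomial.C b) (n+1) := by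
        let σ : Polynomial S →ₐ[ℚ] Polynomial S :=
          ((Polynomial.aeval (Polynomial.X + 1 : Polynomial S)).restrictScalars ℚ)
        have : σ D = _ := rfl
        show σ D = _
        rw [hDdef, map_sub, map_sum]
        simp only [map_mul, map_Ap σ, map_Bp σ, map_add, map_one]
        have hXσ : σ Polynomial.X = Polynomial.X + 1 := by simp [σ]
        have hCσ : ∀ s : S, σ (Polynomial.C s) = Polynomial.C s := by intro s; simp [σ]
        rw [hXσ]
        simp only [hCσ]
      rw [hσ, hDdef]
      have hsum : ∑ k ∈ Finset.range (n+2),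
            (Ap (Polynomial.C z) (Polynomial.X + 1 : Polynomial S) k - Ap (Polynomial.C z) (Polynomial.X : Polynomial S) k)
              * Bp (Polynomial.C z) (Polynomial.C b) (n+1-k)
          = Bp (Polynomial.C z) (Polynomial.X + Polynomial.C z + Polynomial.C b) n := by
        rw [Finset.sum_range_succ']
        simp only [Ap_zero, sub_self, zero_mul, add_zero]
        have : ∀ i ∈ Finset.range (n+1),
            (Ap (Polynomial.C z) (Polynomial.X + 1 : Polynomial S) (i+1) - Ap (Polynomial.C z) (Polynomial.X : Polynomial S) (i+1))
              * Bp (Polynomial.C z) (Polynomial.C b) (n+1-(i+1))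
            = Ap (Polynomial.C z) (Polynomial.X + Polynomial.C z : Polynomial S) i * Bp (Polynomial.C z) (Polynomial.C b) (n-i) := by
          intro i _
          rw [Ap_shift, Nat.succ_sub_succ]
        rw [Finset.sum_congr rfl this, hτ]
      have hB : Bp (Polynomial.C z) (Polynomial.X + 1 + Polynomial.C b : Polynomial S) (n+1) - Bp (Polynomial.C z) (Polynomial.X + Polynomial.C b) (n+1)
          = Bp (Polynomial.C z) (Polynomial.X + Polynomial.C z + Polynomial.C b) n := by
        have := Bp_shift (Polynomial.C z) (Polynomial.X + Polynomial.C b : Polynomial S) n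
        rw [show (Polynomial.X + Polynomial.C b + 1 : Polynomial S) = Polynomial.X + 1 + Polynomial.C b by ring,
            show (Polynomial.X + Polynomial.C b + Polynomial.C z : Polynomial S) = Polynomial.X + Polynomial.C z + Polynomial.C b by ring] at this
        exact this
      simp only [sub_mul] at hsum
      rw [Finset.sum_sub_distrib] at hsum
      linear_combination hsum - hB
    have hconst := shift_eq_const D hshift
    have hev0 : D.eval 0 = 0 := by
      have h0 : Polynomial.aeval (0 : S) D = 0 := by
        let ev0 : Polynomial S →ₐ[ℚ] S := ((Polynomial.aeval (0 : S)).restrictScalars ℚ)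
        show ev0 D = 0
        rw [hDdef, map_sub, map_sum]
        simp only [map_mul, map_Ap ev0, map_Bp ev0, map_add]
        have hX : ev0 Polynomial.X = 0 := by simp [ev0]
        have hC : ∀ s : S, ev0 (Polynomial.C s) = s := by intro s; simp [ev0]
        rw [hX]
        simp only [hC]
        rw [Finset.sum_range_succ']
        simp [Ap_succ]
      rw [← Polynomial.coe_aeval_eq_eval]
      exact h0
    have hzero : D = 0 := by
      rw [shift_eq_const D hshift, hev0, map_zero]
    rw [hDdef] at hzero
    exact sub_eq_zero.mp hzero

section PS
variable {R : Type*} [CommRing R] [Algebra ℚ R]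

lemma coeff_qsmul (n : ℕ) (q : ℚ) (φ : PowerSeries R) :
    PowerSeries.coeff (R := R) n (q • φ) = q • PowerSeries.coeff (R := R) n φ := rfl

lemma coeff_pow_zero_of_lt {f : PowerSeries R} (hf : PowerSeries.constantCoeff (R := R) f = 0)
    {m j : ℕ} (h : m < j) : PowerSeries.coeff (R := R) m (f ^ j) = 0 := by
  have hX : (PowerSeries.X : PowerSeries R) ∣ f := PowerSeries.X_dvd_iff.mpr hf
  exact (PowerSeries.X_pow_dvd_iff.mp (pow_dvd_pow_of_dvd hX j)) m h

lemma coeff_expPS_eq {f : PowerSeries R} (hf : PowerSeries.constantCoeff (R := R) f = 0)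
    {b N : ℕ} (h : b ≤ N) :
    PowerSeries.coeff (R := R) b (expPS f)
      = ∑ j ∈ Finset.range (N+1), ((1:ℚ)/j.factorial) • PowerSeries.coeff (R := R) b (f ^ j) := by
  rw [expPS, PowerSeries.coeff_mk]
  apply Finset.sum_subset
  · exact Finset.range_subset_range.mpr (by omega)
  · intro j hj hj2
    have : b < j := by simp only [Finset.mem_range] at hj hj2; omega
    rw [coeff_pow_zero_of_lt hf this, smul_zero]

lemma expPS_deriv (f : PowerSeries R) (hf : PowerSeries.constantCoeff (R := R) f = 0) :
    d⁄dX R (expPS f) = (d⁄dX R f) * expPS f := by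
  ext n
  rw [PowerSeries.coeff_derivative, coeff_expPS_eq hf (le_refl (n+1)), Finset.sum_mul]
  have step1 : ∀ j : ℕ,
      (((1:ℚ)/j.factorial) • PowerSeries.coeff (R := R) (n+1) (f^j)) * ((n : R) + 1)
        = ((1:ℚ)/j.factorial) • PowerSeries.coeff (R := R) n (d⁄dX R (f^j)) := by
    intro j
    rw [smul_mul_assoc, PowerSeries.coeff_derivative]
  calc ∑ j ∈ Finset.range (n+1+1),
        (((1:ℚ)/j.factorial) • PowerSeries.coeff (R := R) (n+1) (f^j)) * ((n : R) + 1)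
      = ∑ j ∈ Finset.range (n+1+1),
        ((1:ℚ)/j.factorial) • PowerSeries.coeff (R := R) n (d⁄dX R (f^j)) := by
        apply Finset.sum_congr rfl; intro j _; exact step1 j
    _ = ∑ i ∈ Finset.range (n+1),
        ((1:ℚ)/i.factorial) • PowerSeries.coeff (R := R) n ((f^i) * d⁄dX R f) := by
        rw [Finset.sum_range_succ']
        have h0 : ((1:ℚ)/(Nat.factorial 0)) • PowerSeries.coeff (R := R) n (d⁄dX R (f^0)) = 0 := by
          simp
        rw [h0, add_zero]
        apply Finset.sum_congr rfl
        intro i _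
        have hl : d⁄dX R (f^(i+1)) = (i+1 : ℕ) • ((f^i) • d⁄dX R f) := by
          have := Derivation.leibniz_pow (d⁄dX R) f (i+1)
          simpa using this
        rw [hl]
        rw [map_nsmul]
        rw [smul_eq_mul]
        rw [← Nat.cast_smul_eq_nsmul ℚ]
        rw [smul_smul, qfact]
    _ = PowerSeries.coeff (R := R) n
          ((∑ i ∈ Finset.range (n+1), ((1:ℚ)/i.factorial) • f ^ i) * d⁄dX R f) := by
        rw [Finset.sum_mul, map_sum]
        apply Finset.sum_congr rfl
        intro i _
        rw [smul_mul_assoc, coeff_qsmul]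
    _ = PowerSeries.coeff (R := R) n ((d⁄dX R f) * expPS f) := by
        rw [mul_comm _ (d⁄dX R f), PowerSeries.coeff_mul, PowerSeries.coeff_mul]
        apply Finset.sum_congr rfl
        intro p hp
        congr 1
        have hle : p.2 ≤ n := by
          rw [Finset.HasAntidiagonal.mem_antidiagonal] at hp; omega
        rw [coeff_expPS_eq hf (Nat.lt_succ_iff.mp (Nat.lt_succ_of_le hle)), map_sum]
        apply Finset.sum_congr rfl
        intro i _
        rw [coeff_qsmul]

end PS

-- now the genuinely new part
local notation "Θ" => (Polynomial.X : Polynomial ℚ)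
local notation "QT" => Polynomial ℚ

lemma constantCoeff_phiT : PowerSeries.constantCoeff (R := QT) phiT = 0 := by
  rw [← PowerSeries.coeff_zero_eq_constantCoeff_apply, phiT, PowerSeries.coeff_mk]
  simp

/-- Rothe's identity specialized: for any `c`. -/
lemma rothe_spec (c : QT) (n : ℕ) :
    ∑ k ∈ Finset.range (n+1), Ap Θ c k * Bp Θ (Θ - 1) (n-k) = Bp Θ (c + (Θ - 1)) n := by
  have h := rothe (S := QT) Θ (Θ - 1) n
  let ev : Polynomial QT →ₐ[ℚ] QT := ((Polynomial.aeval (R := QT) c).restrictScalars ℚ)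
  have h2 := congrArg ev h
  rw [map_sum] at h2
  simp only [map_mul, map_Ap ev, map_Bp ev, map_add] at h2
  have hX : ev Polynomial.X = c := by simp [ev]
  have hC : ∀ s : QT, ev (Polynomial.C s) = s := by intro s; simp [ev]
  rw [hX] at h2
  simp only [hC] at h2
  exact h2

lemma phiT_coeff_mul (n : ℕ) :
    (PowerSeries.coeff (R := QT) (n+1) phiT) * ((n : QT) + 1) = Bp Θ (Θ - 1) n := by
  rw [phiT, PowerSeries.coeff_mk]
  simp only [Nat.succ_ne_zero, if_false]
  rw [Bp]
  have hprod : ∏ a ∈ Finset.range (n+1-1), (((n+1 : ℕ) : QT) * Θ - ((a : QT) + 1))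
      = ∏ i ∈ Finset.range n, ((Θ - 1) + (n : QT) * Θ - (i : QT)) := by
    rw [Nat.add_sub_cancel]
    apply Finset.prod_congr rfl
    intro i _
    push_cast
    ring
  rw [hprod]
  rw [show Polynomial.C ((1:ℚ)/(n+1).factorial) * (∏ i ∈ Finset.range n, ((Θ - 1) + (n : QT) * Θ - (i : QT)))
      = ((1:ℚ)/(n+1).factorial) • (∏ i ∈ Finset.range n, ((Θ - 1) + (n : QT) * Θ - (i : QT))) by
    rw [Algebra.smul_def, Polynomial.algebraMap_eq]]
  rw [smul_mul_assoc, mul_comm (∏ i ∈ Finset.range n, ((Θ - 1) + (n : QT) * Θ - (i : QT))) _]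
  rw [show ((n : QT) + 1) = ((n+1 : ℕ) : QT) by push_cast; ring]
  rw [natCast_mul_eq_smul, smul_smul, qfact]

lemma main_coeff (c : QT) : ∀ n : ℕ,
    PowerSeries.coeff (R := QT) n (expPS (PowerSeries.C (R := QT) c * phiT)) = Ap Θ c n := by
  have hf : PowerSeries.constantCoeff (R := QT) (PowerSeries.C (R := QT) c * phiT) = 0 := by
    rw [map_mul, constantCoeff_phiT, mul_zero]
  intro n
  induction n using Nat.strong_induction_on with
  | _ n ih =>
    match n with
    | 0 =>
      rw [expPS, PowerSeries.coeff_mk]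
      simp
    | (n+1) =>
      have hder := congrArg (PowerSeries.coeff (R := QT) n) (expPS_deriv _ hf)
      rw [PowerSeries.coeff_derivative, PowerSeries.coeff_mul] at hder
      -- rewrite the convolution
      have hterm : ∀ p ∈ Finset.HasAntidiagonal.antidiagonal n,
          PowerSeries.coeff (R := QT) p.1 (d⁄dX QT (PowerSeries.C (R := QT) c * phiT))
            * PowerSeries.coeff (R := QT) p.2 (expPS (PowerSeries.C (R := QT) c * phiT))
          = c * (Bp Θ (Θ - 1) p.1 * Ap Θ c p.2) := by
        intro p hp
        have h1 : PowerSeries.coeff (R := QT) p.1 (d⁄dX QT (PowerSeries.C (R := QT) c * phiT))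
            = c * Bp Θ (Θ - 1) p.1 := by
          rw [PowerSeries.coeff_derivative, PowerSeries.coeff_C_mul, mul_assoc,
            phiT_coeff_mul]
        have h2 : PowerSeries.coeff (R := QT) p.2 (expPS (PowerSeries.C (R := QT) c * phiT)) = Ap Θ c p.2 :=
          ih p.2 (Nat.lt_succ_of_le (Finset.HasAntidiagonal.antidiagonal.snd_le hp))
        rw [h1, h2]
        ring
      rw [Finset.sum_congr rfl hterm, ← Finset.mul_sum] at hder
      rw [Finset.Nat.sum_antidiagonal_eq_sum_range_succ_mk] at hder
      have hrefl : ∑ k ∈ Finset.range (n+1), Bp Θ (Θ - 1) k * Ap Θ c (n - k)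
          = ∑ k ∈ Finset.range (n+1), Ap Θ c k * Bp Θ (Θ - 1) (n-k) := by
        rw [← Finset.sum_range_reflect]
        apply Finset.sum_congr rfl
        intro k hk
        have hk' : k ≤ n := Nat.lt_succ_iff.mp (Finset.mem_range.mp hk)
        rw [show n + 1 - 1 - k = n - k from by omega, show n - (n - k) = k from by omega,
          mul_comm]
      rw [hrefl, rothe_spec] at hder
      -- identify with Ap (n+1)
      have hAp : Ap Θ c (n+1) * ((n : QT) + 1) = c * Bp Θ (c + (Θ - 1)) n := by
        rw [Ap_succ, Bp]
        have hprod : ∏ i ∈ Finset.range n, (c + ((n+1 : ℕ) : QT) * Θ - ((i : QT) + 1))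
            = ∏ i ∈ Finset.range n, ((c + (Θ - 1)) + (n : QT) * Θ - (i : QT)) := by
          apply Finset.prod_congr rfl
          intro i _
          push_cast
          ring
        rw [hprod, smul_mul_assoc, mul_smul_comm]
        rw [show c * (∏ i ∈ Finset.range n, ((c + (Θ - 1)) + (n : QT) * Θ - (i : QT))) * ((n : QT) + 1)
            = ((n+1 : ℕ) : QT) * (c * ∏ i ∈ Finset.range n, ((c + (Θ - 1)) + (n : QT) * Θ - (i : QT))) by push_cast; ring]
        rw [natCast_mul_eq_smul, smul_smul, qfact]
      have hne : ((n : QT) + 1) ≠ 0 := by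
        have := Nat.cast_add_one_ne_zero (R := QT) n
        exact_mod_cast this
      apply mul_right_cancel₀ hne
      rw [hAp, ← hder]

theorem exp_phi_relation :
    expPS phiT - PowerSeries.X * expPS (PowerSeries.C (R := Polynomial ℚ) Polynomial.X * phiT)
      = 1 := by
  ext n : 1
  rw [map_sub]
  have h1 : expPS phiT = expPS (PowerSeries.C (R := QT) (1 : QT) * phiT) := by rw [map_one, one_mul]
  cases n with
  | zero =>
    rw [h1, main_coeff 1 0, PowerSeries.coeff_zero_X_mul]
    simp
  | succ n =>
    rw [h1, main_coeff 1 (n+1), PowerSeries.coeff_succ_X_mul, main_coeff Θ n,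
      PowerSeries.coeff_one]
    simp only [Nat.succ_ne_zero, if_false]
    rw [sub_eq_zero]
    cases n with
    | zero => simp [Ap_succ]
    | succ m =>
      rw [Ap_succ, Ap_succ, one_mul]
      have e1 : ∏ i ∈ Finset.range (m+1), ((1:QT) + ((m+1+1:ℕ):QT)*Θ - ((i:QT)+1))
          = (((m+1+1:ℕ):QT)*Θ) * ∏ i ∈ Finset.range m, (Θ + ((m+1:ℕ):QT)*Θ - ((i:QT)+1)) := by
        rw [Finset.prod_range_succ', mul_comm]
        congr 1
        · push_cast; ring
        · apply Finset.prod_congr rfl; intro i _; push_cast; ring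
      rw [e1, mul_assoc, natCast_mul_eq_smul, smul_smul, qfact]
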